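/- Let μ ≠ 0, a > 0, T > 0 be real parameters and v : (0,∞) → ℝ be differentiable. Then the point (r₀, 0, s₀, 0), with r₀ > 0 and s₀ > 0, is a critical point of the reduced Nosé-thermostated Hamiltonian 𝐇_μ (i.e., all four partial derivatives of 𝐇_μ vanish there) if and only if T = r₀ · v'(r₀) and μ² = s₀² · r₀³ · v'(r₀). -/

import Mathlib

noncomputable def Hred (μ a T : ℝ) (v : ℝ → ℝ) (r pr s S : ℝ) : ℝ :=
  (pr ^ 2 + μ ^ 2 / r ^ 2) / (2 * s ^ 2) + v r + a / 2 * S ^ 2 + T * Real.log s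

lemma d1 (μ a T : ℝ) (v : ℝ → ℝ) (r₀ s₀ : ℝ) (hr₀ : 0 < r₀) (hs₀ : 0 < s₀)
    (hv : DifferentiableAt ℝ v r₀) :
    deriv (fun r => Hred μ a T v r 0 s₀ 0) r₀
      = deriv v r₀ - μ ^ 2 / (s₀ ^ 2 * r₀ ^ 3) := by
  have hr : (r₀ : ℝ) ^ 2 ≠ 0 := by positivity
  have h1 : HasDerivAt (fun r : ℝ => μ ^ 2 / r ^ 2)
      ((0 * r₀ ^ 2 - μ ^ 2 * (2 * r₀ ^ 1)) / (r₀ ^ 2) ^ 2) r₀ :=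
    (hasDerivAt_const r₀ (μ ^ 2)).div (hasDerivAt_pow 2 r₀) hr
  have h : HasDerivAt (fun r => Hred μ a T v r 0 s₀ 0)
      (((0 + (0 * r₀ ^ 2 - μ ^ 2 * (2 * r₀ ^ 1)) / (r₀ ^ 2) ^ 2) / (2 * s₀ ^ 2))
        + deriv v r₀) r₀ := by
    have := ((((hasDerivAt_const r₀ ((0:ℝ) ^ 2)).add h1).div_const (2 * s₀ ^ 2)).add
      hv.hasDerivAt).add_const (a / 2 * 0 ^ 2 + T * Real.log s₀)
    simpa [Hred, add_assoc] using this
  rw [h.deriv]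
  field_simp
  ring

lemma d3 (μ a T : ℝ) (v : ℝ → ℝ) (r₀ s₀ : ℝ) (hr₀ : 0 < r₀) (hs₀ : 0 < s₀) :
    deriv (fun s => Hred μ a T v r₀ 0 s 0) s₀
      = T / s₀ - μ ^ 2 / (r₀ ^ 2 * s₀ ^ 3) := by
  have hs2 : (2 : ℝ) * s₀ ^ 2 ≠ 0 := by positivity
  have h1 : HasDerivAt (fun s : ℝ => ((0:ℝ) ^ 2 + μ ^ 2 / r₀ ^ 2) / (2 * s ^ 2))
      ((0 * (2 * s₀ ^ 2) - ((0:ℝ) ^ 2 + μ ^ 2 / r₀ ^ 2) * (2 * (2 * s₀ ^ 1))) / (2 * s₀ ^ 2) ^ 2) s₀ :=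
    (hasDerivAt_const s₀ _).div ((hasDerivAt_pow 2 s₀).const_mul 2) hs2
  have h2 : HasDerivAt (fun s : ℝ => T * Real.log s) (T * s₀⁻¹) s₀ :=
    (Real.hasDerivAt_log hs₀.ne').const_mul T
  have h : HasDerivAt (fun s => Hred μ a T v r₀ 0 s 0)
      ((0 * (2 * s₀ ^ 2) - ((0:ℝ) ^ 2 + μ ^ 2 / r₀ ^ 2) * (2 * (2 * s₀ ^ 1))) / (2 * s₀ ^ 2) ^ 2
        + T * s₀⁻¹) s₀ := by
    have := ((h1.add_const (v r₀ + a / 2 * 0 ^ 2)).add h2)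
    refine this.congr_of_eventuallyEq (Filter.Eventually.of_forall fun s => ?_)
    simp only [Hred, Pi.add_apply]
    ring
  rw [h.deriv]
  have hr : (r₀ : ℝ) ≠ 0 := hr₀.ne'
  have hs : (s₀ : ℝ) ≠ 0 := hs₀.ne'
  field_simp
  ring

lemma d2 (μ a T : ℝ) (v : ℝ → ℝ) (r₀ s₀ : ℝ) :
    deriv (fun pr => Hred μ a T v r₀ pr s₀ 0) 0 = 0 := by
  have h : HasDerivAt (fun pr : ℝ => Hred μ a T v r₀ pr s₀ 0)
      ((2 * (0:ℝ) ^ 1) / (2 * s₀ ^ 2)) 0 := by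
    have := (((hasDerivAt_pow 2 (0:ℝ)).add_const (μ ^ 2 / r₀ ^ 2)).div_const
      (2 * s₀ ^ 2)).add_const (v r₀ + a / 2 * 0 ^ 2 + T * Real.log s₀)
    simpa [Hred, add_assoc] using this
  simp [h.deriv]

lemma d4 (μ a T : ℝ) (v : ℝ → ℝ) (r₀ s₀ : ℝ) :
    deriv (fun S => Hred μ a T v r₀ 0 s₀ S) 0 = 0 := by
  have h : HasDerivAt (fun S : ℝ => Hred μ a T v r₀ 0 s₀ S)
      (a / 2 * (2 * (0:ℝ) ^ 1)) 0 := by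
    have := ((((hasDerivAt_pow 2 (0:ℝ)).const_mul (a/2)).add_const
      (T * Real.log s₀)).const_add (((0:ℝ) ^ 2 + μ ^ 2 / r₀ ^ 2) / (2 * s₀ ^ 2) + v r₀))
    simpa [Hred, add_assoc] using this
  simp [h.deriv]

theorem critical_point_iff (μ a T : ℝ) (hμ : μ ≠ 0) (ha : 0 < a) (hT : 0 < T)
    (v : ℝ → ℝ) (hv : ∀ r > (0:ℝ), DifferentiableAt ℝ v r)
    (r₀ s₀ : ℝ) (hr₀ : 0 < r₀) (hs₀ : 0 < s₀) :
    (deriv (fun r => Hred μ a T v r 0 s₀ 0) r₀ = 0 ∧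
     deriv (fun pr => Hred μ a T v r₀ pr s₀ 0) 0 = 0 ∧
     deriv (fun s => Hred μ a T v r₀ 0 s 0) s₀ = 0 ∧
     deriv (fun S => Hred μ a T v r₀ 0 s₀ S) 0 = 0) ↔
    (T = r₀ * deriv v r₀ ∧ μ ^ 2 = s₀ ^ 2 * r₀ ^ 3 * deriv v r₀) := by
  rw [d1 μ a T v r₀ s₀ hr₀ hs₀ (hv r₀ hr₀), d2, d3 μ a T v r₀ s₀ hr₀ hs₀, d4]
  have hr : (r₀ : ℝ) ≠ 0 := hr₀.ne'
  have hs : (s₀ : ℝ) ≠ 0 := hs₀.ne'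
  constructor
  · rintro ⟨h1, -, h3, -⟩
    field_simp at h1 h3
    have e1 : μ ^ 2 = s₀ ^ 2 * r₀ ^ 3 * deriv v r₀ := by linarith
    refine ⟨?_, e1⟩
    have h3' : T * (r₀ ^ 2 * s₀ ^ 2) = μ ^ 2 :=
      mul_left_cancel₀ hs (by linear_combination s₀ * h3)
    rw [e1] at h3'
    have hc : (r₀ * s₀ ^ 2 * r₀) * T = (r₀ * s₀ ^ 2 * r₀) * (r₀ * deriv v r₀) := by ring_nf; ring_nf at h3'; linarith
    exact mul_left_cancel₀ (by positivity) hc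
  · rintro ⟨h1, h2⟩
    refine ⟨?_, rfl, ?_, rfl⟩
    · rw [h2]; field_simp; ring
    · rw [h2, h1]; field_simp; ring
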